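/- For the Greater Than Mean problem, there exists a fixed priority algorithm reading at most ⌈log₂ n⌉ advice bits on inputs of length n that solves the problem optimally. Concretely: there exist an injective priority function P : ℚ × ℕ → ℝ under which items are presented in non-increasing order of their values, and a decision map D taking an advice value a ∈ {0,1,…,n−1} (representable with ⌈log₂ n⌉ bits), the list of previously presented items, and the current item to a Boolean answer, such that for every input of n items there exists an advice value a under which every answer of D is correct; the key fact is that when the values x₁ ≥ x₂ ≥ … ≥ xₙ are sorted in non-increasing order with mean m = (Σᵢ xᵢ)/n, there exists an index k such that xᵢ > m holds exactly for i < k. -/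

import Mathlib

/-- An input item for Greater Than Mean: a value together with an identifier. -/
abbrev GTMItem := ℚ × ℕ

/-- The mean of the values of an input to Greater Than Mean. -/
def gtmMean (l : List GTMItem) : ℚ := (l.map Prod.fst).sum / l.length

/-- The correct answer for an item: `true` iff its value exceeds the mean of the input. -/
def gtmCorrect (l : List GTMItem) (x : GTMItem) : Bool := decide (gtmMean l < x.1)

/-- For Greater Than Mean there is a fixed priority algorithm reading at most
`⌈log₂ n⌉` advice bits (an advice value `a ∈ {0,…,n−1}`) that is optimal:
there are an injective priority function `P` under which items are presented in
non-increasing order of their values and a decision map `D` such that for every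
input there is an advice value under which every answer is correct.  The key
fact: when the values are sorted in non-increasing order, there is an index `k`
such that an item's value exceeds the mean exactly for positions `i < k`. -/
lemma gtm_mul_lt_sum {c : ℚ} : ∀ (L : List ℚ), L ≠ [] → (∀ x ∈ L, c < x) →
    c * L.length < L.sum := by
  intro L
  induction L with
  | nil => simp
  | cons a t ih =>
    intro _ h
    rcases eq_or_ne t [] with rfl | ht
    · simpa using h a (by simp)
    · have := ih ht (fun x hx => h x (List.mem_cons_of_mem _ hx))
      have ha := h a (by simp)
      simp only [List.sum_cons, List.length_cons]
      push_cast
      nlinarith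

lemma gtm_exists_not_correct (l : List GTMItem) (hl : l ≠ []) :
    ∃ x ∈ l, ¬ gtmMean l < x.1 := by
  by_contra h
  push_neg at h
  have hn : (0:ℚ) < l.length := by exact_mod_cast List.length_pos_iff.mpr hl
  have h2 : gtmMean l * l.length < (l.map Prod.fst).sum := by
    have := gtm_mul_lt_sum (c := gtmMean l) (l.map Prod.fst)
      (by simpa using hl) (by
        intro x hx
        rcases List.mem_map.mp hx with ⟨p, hp, rfl⟩
        exact h p hp)
    simpa using this
  rw [gtmMean, div_mul_cancel₀ _ (ne_of_gt hn)] at h2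
  exact lt_irrefl _ h2

/-- In a list where truth of `p` propagates backwards, the true positions form a prefix. -/
lemma gtm_prefix_index {α : Type*} (p : α → Bool) :
    ∀ (l : List α), l.Pairwise (fun u v => p v = true → p u = true) →
      ∃ k, ∀ i : Fin l.length, (p (l.get i) = true ↔ (i : ℕ) < k) := by
  intro l
  induction l with
  | nil => exact fun _ => ⟨0, fun i => absurd i.2 (by simp)⟩
  | cons a t ih =>
    intro hp
    rw [List.pairwise_cons] at hp
    obtain ⟨k', hk'⟩ := ih hp.2
    by_cases ha : p a = true
    · refine ⟨k' + 1, fun i => ?_⟩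
      rcases i with ⟨i, hi⟩
      cases i with
      | zero => simpa using ha
      | succ j =>
        have := hk' ⟨j, by simpa using hi⟩
        simpa using this
    · refine ⟨0, fun i => ?_⟩
      rcases i with ⟨i, hi⟩
      cases i with
      | zero => simpa using ha
      | succ j =>
        simp only [Nat.not_lt_zero, iff_false]
        intro hpt
        exact ha (hp.1 (t.get ⟨j, by simpa using hi⟩) (List.get_mem _ _) (by simpa using hpt))

theorem gtm_priority_log_advice_optimal :
    ∃ (P : GTMItem → ℝ) (D : ℕ → List GTMItem → GTMItem → Bool),
      Function.Injective P ∧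
      (∀ u v : GTMItem, P v < P u → v.1 ≤ u.1) ∧
      (∀ l : List GTMItem, l ≠ [] →
        (l.map Prod.snd).Nodup →
        l.Pairwise (fun u v => P v < P u) →
        ∃ a : ℕ, a < l.length ∧
          ∀ i : Fin l.length,
            D a (l.take (i : ℕ)) (l.get i) = gtmCorrect l (l.get i)) ∧
      (∀ l : List GTMItem, l ≠ [] →
        l.Pairwise (fun u v : GTMItem => v.1 ≤ u.1) →
        ∃ k : ℕ, ∀ i : Fin l.length,
          (gtmCorrect l (l.get i) = true ↔ (i : ℕ) < k)) := by
  haveI : Countable (ℚ ×ₗ ℕ) := inferInstanceAs (Countable (ℚ × ℕ))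
  obtain ⟨e⟩ : Nonempty ((ℚ ×ₗ ℕ) ↪o ℝ) := Order.embedding_from_countable_to_dense _ _
  set P : GTMItem → ℝ := fun x => e (toLex x) with hP
  have hPinj : Function.Injective P := fun u v h => by
    have := e.injective h
    simpa using this
  have hPord : ∀ u v : GTMItem, P v < P u → v.1 ≤ u.1 := by
    intro u v h
    have h3 : toLex v < toLex u := e.lt_iff_lt.mp h
    rcases Prod.Lex.lt_iff.mp h3 with h4 | h4
    · exact le_of_lt h4
    · exact le_of_eq h4.1
  -- key fact (fourth conjunct)
  have key : ∀ l : List GTMItem, l ≠ [] →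
      l.Pairwise (fun u v : GTMItem => v.1 ≤ u.1) →
      ∃ k : ℕ, ∀ i : Fin l.length,
        (gtmCorrect l (l.get i) = true ↔ (i : ℕ) < k) := by
    intro l _ hsort
    apply gtm_prefix_index (fun x => gtmCorrect l x) l
    refine hsort.imp ?_
    intro u v hle hv
    simp only [gtmCorrect, decide_eq_true_eq] at hv ⊢
    exact lt_of_lt_of_le hv hle
  refine ⟨P, fun a prev _ => decide (prev.length < a), hPinj, hPord, ?_, key⟩
  intro l hl _ hpair
  have hsort : l.Pairwise (fun u v : GTMItem => v.1 ≤ u.1) :=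
    hpair.imp (fun h => hPord _ _ h)
  obtain ⟨k, hk⟩ := key l hl hsort
  -- k can be taken < l.length: some item is not correct
  obtain ⟨x, hx, hxm⟩ := gtm_exists_not_correct l hl
  obtain ⟨i, hi⟩ := List.get_of_mem hx
  have hik : ¬ ((i : ℕ) < k) := by
    rw [← hk i, hi]
    simpa [gtmCorrect] using hxm
  have hkl : k ≤ (i : ℕ) := Nat.le_of_not_lt hik
  refine ⟨k, lt_of_le_of_lt hkl i.2, fun j => ?_⟩
  have hlen : (l.take (j : ℕ)).length = (j : ℕ) := List.length_take_of_le (le_of_lt j.2)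
  show decide ((l.take (j : ℕ)).length < k) = gtmCorrect l (l.get j)
  rw [hlen]
  by_cases h : (j : ℕ) < k
  · simp only [h, decide_true]
    exact ((hk j).mpr h).symm
  · simp only [h, decide_eq_false_iff_not, decide_false]
    exact (Bool.eq_false_iff.mpr (fun hc => h ((hk j).mp hc))).symm
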